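/- Let n ≥ 1, let γ₁, …, γ_n > −1 with μ_i = γ_i + 1, let Φ : ℂ∖ℝ_{≤0} → M_{n+1}(ℂ) be the lower unitriangular matrix with Φ(z)_{ij} = z^{μ_j+⋯+μ_{i−1}} / ∏_{l=j}^{i−1}(μ_l+⋯+μ_{i−1}) for i > j, and let Λ = diag(λ₁, …, λ_{n+1}) with λ_k > 0 and λ₁⋯λ_{n+1} = 1. For 1 ≤ i ≤ n let D_i(z) be the leading principal i×i minor of (ΛΦ(z))*(ΛΦ(z)), let U_i(z) = −log D_i(z) + 2γ^i log|z|, and u_i = Σ_{j=1}^n a_{ij} U_j. Then for each 1 ≤ i ≤ n the function z ↦ u_i(z) + 2(2 + γ_{n+1−i}) log|z| is bounded on { z ∈ ℂ∖ℝ_{≤0} : |z| ≥ 1 }. -/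

import Mathlib

open Complex Filter Matrix

/-- The explicit lower unitriangular matrix `Φ(z)` of the `A_n` Toda system, with
`Φ(z)_{ij} = z^{μ_j + ⋯ + μ_{i−1}} / ∏_{l=j}^{i−1} (μ_l + ⋯ + μ_{i−1})` below the
diagonal (0-based indices, `μ` indexed by `0, …, n−1`). -/
noncomputable def PhiA (n : ℕ) (μ : ℕ → ℝ) (z : ℂ) : Matrix (Fin (n + 1)) (Fin (n + 1)) ℂ :=
  Matrix.of fun i j : Fin (n + 1) =>
    if (i : ℕ) = (j : ℕ) then 1
    else if (i : ℕ) < (j : ℕ) then 0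
    else z ^ (((∑ l ∈ Finset.Ico (j : ℕ) (i : ℕ), μ l : ℝ)) : ℂ) /
      ∏ l ∈ Finset.Ico (j : ℕ) (i : ℕ), ((∑ k ∈ Finset.Ico l (i : ℕ), μ k : ℝ) : ℂ)

/-- `D_i(z)`: the leading principal `(i+1)×(i+1)` minor (0-based `i`) of
`(ΛΦ(z))*(ΛΦ(z))`, where `M*` is the conjugate transpose. -/
noncomputable def DA (n : ℕ) (μ : ℕ → ℝ) (lam : Fin (n + 1) → ℝ) (i : Fin n) (z : ℂ) : ℂ :=
  (((Matrix.diagonal (fun k => (lam k : ℂ)) * PhiA n μ z)ᴴ *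
      (Matrix.diagonal (fun k => (lam k : ℂ)) * PhiA n μ z)).submatrix
    (Fin.castLE (Nat.succ_le_succ i.isLt.le)) (Fin.castLE (Nat.succ_le_succ i.isLt.le))).det

/-- `U_i(z) = −log D_i(z) + 2 γ^i log|z|`, and `u_i = Σ_j a_{ij} U_j` (0-based indices,
`gUp j = γ^j`). -/
noncomputable def uA (n : ℕ) (μ : ℕ → ℝ) (lam : Fin (n + 1) → ℝ) (a : ℕ → ℕ → ℝ)
    (gUp : ℕ → ℝ) (i : Fin n) (z : ℂ) : ℝ :=
  ∑ j : Fin n, a (i : ℕ) (j : ℕ) *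
    (-Real.log (DA n μ lam j z).re + 2 * gUp (j : ℕ) * Real.log (‖z‖))


variable {N m : ℕ}

lemma perm_group_sum (A : Matrix (Fin N) (Fin m) ℝ) (w : Fin N → ℝ) (s : Fin m → Fin N) :
    ∑ σ : Equiv.Perm (Fin m),
      (∏ p, (w ((s ∘ σ) p) * A ((s ∘ σ) p) p)) * (A.submatrix (s ∘ σ) id).det
      = (∏ p, w (s p)) * (A.submatrix s id).det ^ 2 := by
  have key : ∀ σ : Equiv.Perm (Fin m),
      (∏ p, (w ((s ∘ σ) p) * A ((s ∘ σ) p) p)) * (A.submatrix (s ∘ σ) id).det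
      = ((∏ p, w (s p)) * (A.submatrix s id).det) *
          (((Equiv.Perm.sign σ : ℤ) : ℝ) * ∏ p, A (s (σ p)) p) := by
    intro σ
    have hsub : A.submatrix (s ∘ σ) id = (A.submatrix s id).submatrix σ id := by
      rw [Matrix.submatrix_submatrix]; rfl
    rw [hsub, Matrix.det_permute, Finset.prod_mul_distrib,
      show (∏ p, w ((s ∘ σ) p)) = ∏ p, w (s p) from Equiv.prod_comp σ (fun p => w (s p))]
    simp only [Function.comp_apply]
    push_cast
    ring
  rw [Finset.sum_congr rfl (fun σ _ => key σ), ← Finset.mul_sum]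
  have hdet : ∑ σ : Equiv.Perm (Fin m), ((Equiv.Perm.sign σ : ℤ) : ℝ) * ∏ p, A (s (σ p)) p
      = (A.submatrix s id).det := by
    rw [Matrix.det_apply]
    refine (Finset.sum_congr rfl fun σ _ => ?_).symm
    simp [Units.smul_def, zsmul_eq_mul, Matrix.submatrix_apply]
  rw [hdet]; ring

lemma inj_sum_eq (F : (Fin m → Fin N) → ℝ) :
    ∑ r ∈ Finset.univ.filter (fun r : Fin m → Fin N => Function.Injective r), F r
      = ∑ s ∈ Finset.univ.filter (fun s : Fin m → Fin N => StrictMono s),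
          ∑ σ : Equiv.Perm (Fin m), F (s ∘ σ) := by
  rw [← Finset.sum_product']
  symm
  refine Finset.sum_bij (fun pr _ => pr.1 ∘ pr.2) ?_ ?_ ?_ ?_
  · rintro ⟨s, σ⟩ h
    rw [Finset.mem_product] at h
    have hs : StrictMono s := (Finset.mem_filter.mp h.1).2
    exact Finset.mem_filter.mpr ⟨Finset.mem_univ _, hs.injective.comp σ.injective⟩
  · rintro ⟨s₁, σ₁⟩ h₁ ⟨s₂, σ₂⟩ h₂ heq
    rw [Finset.mem_product] at h₁ h₂
    have hs₁ : StrictMono s₁ := (Finset.mem_filter.mp h₁.1).2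
    have hs₂ : StrictMono s₂ := (Finset.mem_filter.mp h₂.1).2
    have heq' : s₁ ∘ σ₁ = s₂ ∘ σ₂ := heq
    have hrange : Set.range s₁ = Set.range s₂ := by
      have e1 : Set.range (s₁ ∘ σ₁) = Set.range s₁ := by
        simp [Set.range_comp, Equiv.range_eq_univ]
      have e2 : Set.range (s₂ ∘ σ₂) = Set.range s₂ := by
        simp [Set.range_comp, Equiv.range_eq_univ]
      rw [← e1, ← e2, heq']
    have hwf : WellFoundedLT (Fin m) := inferInstance
    have hss : s₁ = s₂ :=
      (@StrictMono.range_inj (Fin m) (Fin N) inferInstance inferInstance hwf _ _ hs₁ hs₂).mp hrange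
    subst hss
    have hσ : σ₁ = σ₂ := by
      ext p
      exact congrArg Fin.val (hs₁.injective (congrFun heq' p))
    simp [hσ]
  · intro r hr
    have hinj : Function.Injective r := (Finset.mem_filter.mp hr).2
    set T := Finset.image r Finset.univ with hTdef
    have hT : T.card = m := by
      rw [hTdef, Finset.card_image_of_injective _ hinj, Finset.card_univ, Fintype.card_fin]
    have hmem : ∀ p, r p ∈ T := fun p => Finset.mem_image_of_mem r (Finset.mem_univ p)
    set g : Fin m → Fin m := fun p => (T.orderIsoOfFin hT).symm ⟨r p, hmem p⟩ with hgdef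
    have ginj : Function.Injective g := by
      intro p q h
      apply hinj
      have h2 := congrArg (T.orderIsoOfFin hT) h
      simp only [hgdef, OrderIso.apply_symm_apply] at h2
      exact congrArg Subtype.val h2
    have gbij : Function.Bijective g := Finite.injective_iff_bijective.mp ginj
    refine ⟨⟨⇑(T.orderEmbOfFin hT), Equiv.ofBijective g gbij⟩, ?_, ?_⟩
    · refine Finset.mem_product.mpr ⟨Finset.mem_filter.mpr ⟨Finset.mem_univ _,
        (T.orderEmbOfFin hT).strictMono⟩, Finset.mem_univ _⟩
    · funext p
      show T.orderEmbOfFin hT ((Equiv.ofBijective g gbij) p) = r p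
      rw [← Finset.coe_orderIsoOfFin_apply]
      simp [hgdef]
  · intro pr h
    rfl

lemma det_expand' (A : Matrix (Fin N) (Fin m) ℝ) (w : Fin N → ℝ) :
    (Aᵀ * Matrix.diagonal w * A).det =
      ∑ r : Fin m → Fin N, (∏ p, (w (r p) * A (r p) p)) * (A.submatrix r id).det := by
  have hB : (Aᵀ * Matrix.diagonal w * A) =
      Matrix.of (fun p => ∑ k : Fin N, (w k * A k p) • (A k)) := by
    rw [Matrix.mul_assoc]
    ext p q
    simp only [Matrix.mul_apply, Matrix.diagonal_mul, Matrix.of_apply, Finset.sum_apply,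
      Pi.smul_apply, smul_eq_mul, Matrix.transpose_apply]
    refine Finset.sum_congr rfl fun k _ => ?_
    rw [Finset.sum_eq_single k (fun b _ hb => by simp [Matrix.diagonal_apply_ne _ (Ne.symm hb)])
      (fun h => absurd (Finset.mem_univ k) h), Matrix.diagonal_apply_eq]
    ring
  have h0 : (Matrix.of (fun p => ∑ k : Fin N, (w k * A k p) • (A k))).det =
      (Matrix.detRowAlternating : ((Fin m → ℝ) [⋀^Fin m]→ₗ[ℝ] ℝ)).toMultilinearMap
        (fun p => ∑ k : Fin N, (w k * A k p) • (A k)) := rfl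
  rw [hB, h0,
    (Matrix.detRowAlternating : ((Fin m → ℝ) [⋀^Fin m]→ₗ[ℝ] ℝ)).toMultilinearMap.map_sum
      (α := fun _ => Fin N) (g := fun p k => (w k * A k p) • (A k))]
  refine Finset.sum_congr rfl fun r _ => ?_
  rw [MultilinearMap.map_smul_univ]
  rfl

lemma cauchy_binet (A : Matrix (Fin N) (Fin m) ℝ) (w : Fin N → ℝ) :
    (Aᵀ * Matrix.diagonal w * A).det =
      ∑ r ∈ Finset.univ.filter (fun r : Fin m → Fin N => StrictMono r),
        (∏ p, w (r p)) * (A.submatrix r id).det ^ 2 := by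
  rw [det_expand']
  rw [← Finset.sum_filter_add_sum_filter_not Finset.univ
    (fun r : Fin m → Fin N => Function.Injective r)]
  have h2 : ∑ r ∈ Finset.univ.filter
      (fun r : Fin m → Fin N => ¬ Function.Injective r),
      (∏ p, (w (r p) * A (r p) p)) * (A.submatrix r id).det = 0 := by
    refine Finset.sum_eq_zero fun r hr => ?_
    obtain ⟨p, q, hpq, hne⟩ :=
      Function.not_injective_iff.mp (Finset.mem_filter.mp hr).2
    have hrow : (A.submatrix r id) p = (A.submatrix r id) q := by
      funext j; simp [Matrix.submatrix_apply, hpq]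
    rw [Matrix.det_zero_of_row_eq hne hrow, mul_zero]
  rw [h2, add_zero,
    inj_sum_eq (fun r => (∏ p, (w (r p) * A (r p) p)) * (A.submatrix r id).det)]
  exact Finset.sum_congr rfl fun s _ => perm_group_sum A w s

namespace AnT


noncomputable def xs (μ : ℕ → ℝ) (k : ℕ) : ℝ := ∑ l ∈ Finset.range k, μ l

noncomputable def Cm (n : ℕ) (μ : ℕ → ℝ) : Matrix (Fin (n+1)) (Fin (n+1)) ℝ :=
  Matrix.of fun i j => if (j:ℕ) ≤ (i:ℕ) then
    (∏ l ∈ Finset.Ico (j:ℕ) (i:ℕ), (xs μ (i:ℕ) - xs μ l))⁻¹ else 0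

noncomputable def Gm (n : ℕ) (μ : ℕ → ℝ) : Matrix (Fin (n+1)) (Fin (n+1)) ℝ :=
  Matrix.of fun i q => ∏ l ∈ Finset.range (q:ℕ), (xs μ (i:ℕ) - xs μ l)

noncomputable def dcoef (n : ℕ) (μ : ℕ → ℝ) (k : Fin (n+1)) : ℝ :=
  (∏ l ∈ Finset.range (k:ℕ), (xs μ (k:ℕ) - xs μ l))⁻¹

section xsfacts

variable {n : ℕ} {μ : ℕ → ℝ} (hμ : ∀ l < n, 0 < μ l)

lemma xs_succ (k : ℕ) : xs μ (k+1) = xs μ k + μ k := Finset.sum_range_succ μ k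

include hμ in
lemma xs_lt (a b : ℕ) (hab : a < b) (hb : b ≤ n) : xs μ a < xs μ b := by
  have h : xs μ b - xs μ a = ∑ l ∈ Finset.Ico a b, μ l := by
    rw [Finset.sum_Ico_eq_sub _ hab.le]; rfl
  have hpos : 0 < ∑ l ∈ Finset.Ico a b, μ l := by
    refine Finset.sum_pos (fun l hl => ?_) ⟨a, Finset.mem_Ico.mpr ⟨le_refl a, hab⟩⟩
    rw [Finset.mem_Ico] at hl
    exact hμ l (by omega)
  linarith

include hμ in
lemma xs_le (a b : ℕ) (hab : a ≤ b) (hb : b ≤ n) : xs μ a ≤ xs μ b := by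
  rcases eq_or_lt_of_le hab with rfl | h
  · exact le_refl _
  · exact (xs_lt hμ a b h hb).le

include hμ in
lemma Cm_eq_dcoef_mul_Gm (i q : Fin (n+1)) :
    Cm n μ i q = dcoef n μ i * Gm n μ i q := by
  by_cases h : (q:ℕ) ≤ (i:ℕ)
  · have hsplit : (∏ l ∈ Finset.range (q:ℕ), (xs μ (i:ℕ) - xs μ l)) *
        (∏ l ∈ Finset.Ico (q:ℕ) (i:ℕ), (xs μ (i:ℕ) - xs μ l))
        = ∏ l ∈ Finset.range (i:ℕ), (xs μ (i:ℕ) - xs μ l) :=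
      Finset.prod_range_mul_prod_Ico _ h
    have hq0 : (∏ l ∈ Finset.range (q:ℕ), (xs μ (i:ℕ) - xs μ l)) ≠ 0 := by
      refine ne_of_gt (Finset.prod_pos fun l hl => ?_)
      rw [Finset.mem_range] at hl
      have : l < (i:ℕ) := lt_of_lt_of_le hl h
      have := xs_lt hμ l (i:ℕ) this (by omega)
      linarith
    simp only [Cm, Gm, dcoef, Matrix.of_apply, if_pos h]
    rw [← hsplit, mul_inv]
    field_simp
  · simp only [Cm, Gm, dcoef, Matrix.of_apply, if_neg h]
    have : (i:ℕ) ∈ Finset.range (q:ℕ) := Finset.mem_range.mpr (by omega)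
    rw [Finset.prod_eq_zero this (by ring), mul_zero]

end xsfacts

lemma strictMono_nat_bound {m N : ℕ} (r : Fin m → Fin N) (hr : StrictMono r)
    (p q : Fin m) (hpq : (p:ℕ) ≤ (q:ℕ)) : (r p : ℕ) + ((q:ℕ) - (p:ℕ)) ≤ (r q : ℕ) := by
  have key : ∀ d : ℕ, ∀ p q : Fin m, (q:ℕ) = (p:ℕ) + d → (r p : ℕ) + d ≤ (r q : ℕ) := by
    intro d
    induction d with
    | zero => intro p q h; have : p = q := Fin.ext (by omega); subst this; omega
    | succ d ih =>
      intro p q h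
      have hq' : (p:ℕ) + d < m := by have := q.isLt; omega
      set q' : Fin m := ⟨(p:ℕ) + d, hq'⟩ with hq'def
      have h1 : (r p : ℕ) + d ≤ (r q' : ℕ) := ih p q' rfl
      have h2 : q' < q := by rw [Fin.lt_def]; simp [hq'def]; omega
      have h3 : (r q' : ℕ) < (r q : ℕ) := hr h2
      omega
  have := key ((q:ℕ) - (p:ℕ)) p q (by omega)
  omega


-- new defs
noncomputable def AsubM (n : ℕ) (μ : ℕ → ℝ) (j : Fin n) :
    Matrix (Fin (n+1)) (Fin ((j:ℕ)+1)) ℝ :=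
  (Cm n μ).submatrix id (Fin.castLE (Nat.succ_le_succ j.isLt.le))

noncomputable def wf (n : ℕ) (μ : ℕ → ℝ) (lam : Fin (n+1) → ℝ) (t : ℝ) (k : Fin (n+1)) : ℝ :=
  (lam k)^2 * t ^ (2 * xs μ (k:ℕ))

noncomputable def gdet (n : ℕ) (μ : ℕ → ℝ) (lam : Fin (n+1) → ℝ) (j : Fin n) (t : ℝ) : ℝ :=
  ((AsubM n μ j)ᵀ * Matrix.diagonal (wf n μ lam t) * AsubM n μ j).det

noncomputable def em (n : ℕ) (μ : ℕ → ℝ) (j : ℕ) : ℝ :=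
  ∑ p ∈ Finset.range (j+1), xs μ (n - j + p)

def rstar (n : ℕ) (j : Fin n) : Fin ((j:ℕ)+1) → Fin (n+1) :=
  fun p => ⟨n - (j:ℕ) + (p:ℕ), by omega⟩

lemma rstar_strictMono (n : ℕ) (j : Fin n) : StrictMono (rstar n j) := by
  intro p q h
  rw [Fin.lt_def] at h ⊢
  simp only [rstar]
  omega

lemma prod_rpow_sum {α : Type*} (t : ℝ) (ht : 0 < t) (s : Finset α) (f : α → ℝ) :
    ∏ i ∈ s, t ^ (f i) = t ^ (∑ i ∈ s, f i) := by
  classical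
  induction s using Finset.induction_on with
  | empty => simp
  | insert _ _ hna ih =>
    rw [Finset.prod_insert hna, Finset.sum_insert hna, ih, ← Real.rpow_add ht]

lemma det_rstar_ne_zero {n : ℕ} {μ : ℕ → ℝ} (hμ : ∀ l < n, 0 < μ l) (j : Fin n) :
    ((AsubM n μ j).submatrix (rstar n j) id).det ≠ 0 := by
  have hsub : (AsubM n μ j).submatrix (rstar n j) id
      = (Cm n μ).submatrix (rstar n j) (Fin.castLE (Nat.succ_le_succ j.isLt.le)) := by
    rw [AsubM, Matrix.submatrix_submatrix]
    rfl
  have hfac : (Cm n μ).submatrix (rstar n j) (Fin.castLE (Nat.succ_le_succ j.isLt.le))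
      = Matrix.diagonal (fun p => dcoef n μ (rstar n j p)) *
        (Gm n μ).submatrix (rstar n j) (Fin.castLE (Nat.succ_le_succ j.isLt.le)) := by
    ext p q
    rw [Matrix.submatrix_apply, Cm_eq_dcoef_mul_Gm hμ, Matrix.diagonal_mul,
      Matrix.submatrix_apply]
  have hdiag : (∏ p, dcoef n μ (rstar n j p)) ≠ 0 := by
    refine Finset.prod_ne_zero_iff.mpr fun p _ => ?_
    rw [dcoef]
    refine inv_ne_zero (ne_of_gt (Finset.prod_pos fun l hl => ?_))
    rw [Finset.mem_range] at hl
    have := xs_lt hμ l (rstar n j p : ℕ) hl (by have := (rstar n j p).isLt; omega)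
    linarith
  -- the Vandermonde part
  set v : Fin ((j:ℕ)+1) → ℝ := fun p => xs μ ((rstar n j p : ℕ)) with hv
  have hvmono : StrictMono v := by
    intro p q h
    refine xs_lt hμ _ _ ((rstar_strictMono n j) h) (by have := (rstar n j q).isLt; omega)
  have hpoly : (Gm n μ).submatrix (rstar n j) (Fin.castLE (Nat.succ_le_succ j.isLt.le))
      = Matrix.of (fun p q : Fin ((j:ℕ)+1) =>
          ((∏ l ∈ Finset.range (q:ℕ), (Polynomial.X - Polynomial.C (xs μ l))).eval (v p))) := by
    ext p q
    simp only [Matrix.submatrix_apply, Gm, Matrix.of_apply, Polynomial.eval_prod,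
      Polynomial.eval_sub, Polynomial.eval_X, Polynomial.eval_C, Fin.coe_castLE, hv]
  have hvdm : ((Gm n μ).submatrix (rstar n j)
      (Fin.castLE (Nat.succ_le_succ j.isLt.le))).det = (Matrix.vandermonde v).det := by
    rw [hpoly]
    refine (Matrix.det_eval_matrixOfPolynomials_eq_det_vandermonde v _ (fun q => ?_)
      (fun q => ?_)).symm
    · rw [Polynomial.natDegree_prod _ _ (fun l _ => Polynomial.X_sub_C_ne_zero _)]
      simp [Polynomial.natDegree_X_sub_C]
    · exact Polynomial.monic_prod_of_monic _ _ (fun l _ => Polynomial.monic_X_sub_C _)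
  rw [hsub, hfac, Matrix.det_mul, Matrix.det_diagonal, hvdm]
  exact mul_ne_zero hdiag (Matrix.det_vandermonde_ne_zero_iff.mpr hvmono.injective)

lemma gdet_bounds {n : ℕ} {μ : ℕ → ℝ} {lam : Fin (n+1) → ℝ}
    (hμ : ∀ l < n, 0 < μ l) (hlam : ∀ k, 0 < lam k) (j : Fin n) :
    ∃ c K : ℝ, 0 < c ∧ ∀ t : ℝ, 1 ≤ t →
      c * t ^ (2 * em n μ (j:ℕ)) ≤ gdet n μ lam j t ∧
        gdet n μ lam j t ≤ K * t ^ (2 * em n μ (j:ℕ)) := by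
  classical
  set m := (j:ℕ)+1 with hm
  set A := AsubM n μ j with hA
  set SM := Finset.univ.filter (fun r : Fin m → Fin (n+1) => StrictMono r) with hSM
  set coef : (Fin m → Fin (n+1)) → ℝ :=
    fun r => (∏ p, (lam (r p))^2) * ((A.submatrix r id).det) ^ 2 with hcoef
  have hcoefnn : ∀ r, 0 ≤ coef r := by
    intro r
    exact mul_nonneg (Finset.prod_nonneg fun p _ => sq_nonneg _) (sq_nonneg _)
  have hterm : ∀ t : ℝ, 0 < t → ∀ r : Fin m → Fin (n+1),
      (∏ p, wf n μ lam t (r p)) * ((A.submatrix r id).det) ^ 2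
        = coef r * t ^ (2 * ∑ p, xs μ ((r p : ℕ))) := by
    intro t ht r
    have h1 : (∏ p, wf n μ lam t (r p))
        = (∏ p, (lam (r p))^2) * t ^ (∑ p, 2 * xs μ ((r p : ℕ))) := by
      rw [← prod_rpow_sum t ht, ← Finset.prod_mul_distrib]
      rfl
    have h2 : (∑ p, 2 * xs μ ((r p : ℕ))) = 2 * ∑ p, xs μ ((r p : ℕ)) :=
      (Finset.mul_sum _ _ _).symm
    rw [h1, h2, hcoef]
    ring
  have hexp : ∀ r ∈ SM, (∑ p, xs μ ((r p : ℕ))) ≤ ∑ p : Fin m, xs μ (n - (j:ℕ) + (p:ℕ)) := by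
    intro r hr
    have hrm : StrictMono r := (Finset.mem_filter.mp hr).2
    refine Finset.sum_le_sum fun p _ => ?_
    have hplt : (p:ℕ) < m := p.isLt
    have hpj : (p:ℕ) ≤ (j:ℕ) := Nat.lt_succ_iff.mp hplt
    have hjm : (j:ℕ) < m := by omega
    have hlast : (r p : ℕ) + ((j:ℕ) - (p:ℕ)) ≤ (r ⟨(j:ℕ), hjm⟩ : ℕ) :=
      strictMono_nat_bound r hrm p ⟨(j:ℕ), hjm⟩ hpj
    have hrlast : (r ⟨(j:ℕ), hjm⟩ : ℕ) ≤ n := by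
      have := (r ⟨(j:ℕ), hjm⟩).isLt; omega
    have hval : (r p : ℕ) ≤ n - (j:ℕ) + (p:ℕ) := by
      have hjn : (j:ℕ) < n := j.isLt
      omega
    exact xs_le hμ _ _ hval (by have hjn : (j:ℕ) < n := j.isLt; omega)
  have hemsum : (∑ p : Fin m, xs μ (n - (j:ℕ) + (p:ℕ))) = em n μ (j:ℕ) := by
    rw [em, ← Fin.sum_univ_eq_sum_range (fun p => xs μ (n - (j:ℕ) + p)) m]
  have hrstar_mem : rstar n j ∈ SM :=
    Finset.mem_filter.mpr ⟨Finset.mem_univ _, rstar_strictMono n j⟩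
  have hrstar_sum : (∑ p, xs μ ((rstar n j p : ℕ))) = em n μ (j:ℕ) := by
    rw [← hemsum]
    rfl
  refine ⟨coef (rstar n j), ∑ r ∈ SM, coef r, ?_, ?_⟩
  · refine mul_pos (Finset.prod_pos fun p _ => pow_pos (hlam _) 2) ?_
    have := det_rstar_ne_zero hμ j
    positivity
  intro t ht
  have ht0 : (0:ℝ) < t := lt_of_lt_of_le one_pos ht
  have hcb : gdet n μ lam j t = ∑ r ∈ SM, coef r * t ^ (2 * ∑ p, xs μ ((r p : ℕ))) := by
    rw [gdet]
    rw [cauchy_binet (AsubM n μ j) (wf n μ lam t)]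
    exact Finset.sum_congr rfl fun r _ => hterm t ht0 r
  rw [hcb]
  constructor
  · have h1 : coef (rstar n j) * t ^ (2 * ∑ p, xs μ ((rstar n j p : ℕ)))
        ≤ ∑ r ∈ SM, coef r * t ^ (2 * ∑ p, xs μ ((r p : ℕ))) :=
      Finset.single_le_sum (f := fun r => coef r * t ^ (2 * ∑ p, xs μ ((r p : ℕ))))
        (fun r _ => mul_nonneg (hcoefnn r) (Real.rpow_nonneg ht0.le _)) hrstar_mem
    rwa [hrstar_sum] at h1
  · rw [Finset.sum_mul]
    refine Finset.sum_le_sum fun r hr => ?_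
    refine mul_le_mul_of_nonneg_left ?_ (hcoefnn r)
    refine Real.rpow_le_rpow_of_exponent_le ht ?_
    have h3 := hexp r hr
    rw [hemsum] at h3
    linarith


lemma scalar_norm (z : ℂ) (c x : ℝ) :
    star ((c:ℂ) * z ^ ((x:ℝ):ℂ)) * ((c:ℂ) * z ^ ((x:ℝ):ℂ))
      = ((c^2 * (‖z‖) ^ (2*x) : ℝ) : ℂ) := by
  rw [Complex.star_def, mul_comm, Complex.mul_conj]
  norm_cast
  rw [Complex.normSq_eq_norm_sq, norm_mul, Complex.norm_real, Real.norm_eq_abs, Complex.norm_cpow_real, mul_pow,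
    _root_.sq_abs, ← Real.rpow_natCast (‖z‖ ^ x) 2, ← Real.rpow_mul (norm_nonneg z)]
  norm_num [mul_comm x 2]

lemma scalar_norm1 (z : ℂ) (x : ℝ) :
    star (z ^ ((x:ℝ):ℂ)) * (z ^ ((x:ℝ):ℂ)) = (((‖z‖) ^ (2*x) : ℝ) : ℂ) := by
  have := scalar_norm z 1 x
  simpa using this

lemma phi_factor (n : ℕ) (μ : ℕ → ℝ) (lam : Fin (n+1) → ℝ) (z : ℂ) (hz : z ≠ 0) :
    Matrix.diagonal (fun k : Fin (n+1) => (lam k : ℂ)) * PhiA n μ z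
      = Matrix.diagonal (fun k : Fin (n+1) => (lam k : ℂ) * z ^ ((xs μ (k:ℕ) : ℝ) : ℂ)) *
        (Cm n μ).map (fun r : ℝ => (r : ℂ)) *
        Matrix.diagonal (fun p : Fin (n+1) => z ^ ((-(xs μ (p:ℕ)) : ℝ) : ℂ)) := by
  ext i q
  rw [Matrix.diagonal_mul, Matrix.mul_diagonal, Matrix.diagonal_mul]
  simp only [PhiA, Cm, Matrix.map_apply, Matrix.of_apply]
  rcases lt_trichotomy (i:ℕ) (q:ℕ) with hlt | heq | hgt
  · rw [if_neg (by omega), if_pos hlt, if_neg (by omega)]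
    simp
  · have hiq : i = q := Fin.ext heq
    subst hiq
    rw [if_pos rfl, if_pos (le_refl _)]
    rw [show Finset.Ico (i:ℕ) (i:ℕ) = ∅ from Finset.Ico_self _]
    simp only [Finset.prod_empty, inv_one, Complex.ofReal_one, mul_one]
    have hzz : z ^ ((xs μ (i:ℕ) : ℝ) : ℂ) * z ^ ((-(xs μ (i:ℕ)) : ℝ) : ℂ) = 1 := by
      rw [← Complex.cpow_add _ _ hz, ← Complex.ofReal_add, add_neg_cancel,
        Complex.ofReal_zero, Complex.cpow_zero]
    rw [mul_assoc, hzz, mul_one]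
  · rw [if_neg (by omega), if_neg (by omega), if_pos (by omega)]
    have hqi : (q:ℕ) ≤ (i:ℕ) := le_of_lt hgt
    have hsum : (∑ l ∈ Finset.Ico (q:ℕ) (i:ℕ), μ l) = xs μ (i:ℕ) - xs μ (q:ℕ) :=
      Finset.sum_Ico_eq_sub μ hqi
    have hden : (∏ l ∈ Finset.Ico (q:ℕ) (i:ℕ), ((∑ k ∈ Finset.Ico l (i:ℕ), μ k : ℝ) : ℂ))
        = ((∏ l ∈ Finset.Ico (q:ℕ) (i:ℕ), (xs μ (i:ℕ) - xs μ l) : ℝ) : ℂ) := by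
      rw [Complex.ofReal_prod]
      refine Finset.prod_congr rfl fun l hl => ?_
      rw [Finset.mem_Ico] at hl
      rw [Finset.sum_Ico_eq_sub μ hl.2.le]
      rfl
    have hpow : z ^ ((xs μ (i:ℕ) - xs μ (q:ℕ) : ℝ) : ℂ)
        = z ^ ((xs μ (i:ℕ) : ℝ) : ℂ) * z ^ ((-(xs μ (q:ℕ)) : ℝ) : ℂ) := by
      rw [← Complex.cpow_add _ _ hz]
      congr 1
      push_cast
      ring
    rw [hsum, hden, hpow, div_eq_mul_inv, Complex.ofReal_inv]
    ring

lemma DA_eq (n : ℕ) (μ : ℕ → ℝ) (lam : Fin (n+1) → ℝ) (j : Fin n) (z : ℂ) (hz : z ≠ 0) :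
    DA n μ lam j z =
      (((∏ p : Fin ((j:ℕ)+1), (‖z‖) ^ (2 * (-(xs μ (p:ℕ))))) *
        gdet n μ lam j (‖z‖) : ℝ) : ℂ) := by
  classical
  set t := ‖z‖ with htdef
  set em : Fin ((j:ℕ)+1) → Fin (n+1) := Fin.castLE (Nat.succ_le_succ j.isLt.le) with hemdef
  set d1 : Fin (n+1) → ℂ := fun k => (lam k : ℂ) * z ^ ((xs μ (k:ℕ) : ℝ) : ℂ) with hd1
  set d2 : Fin (n+1) → ℂ := fun p => z ^ ((-(xs μ (p:ℕ)) : ℝ) : ℂ) with hd2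
  set Cc := (Cm n μ).map (fun r : ℝ => (r : ℂ)) with hCcdef
  have hmul_map : ∀ (P Q : Matrix (Fin (n+1)) (Fin (n+1)) ℝ),
      (P.map (fun r : ℝ => (r:ℂ))) * (Q.map (fun r : ℝ => (r:ℂ)))
        = (P*Q).map (fun r : ℝ => (r:ℂ)) := by
    intro P Q
    ext p q
    simp only [Matrix.mul_apply, Matrix.map_apply]
    push_cast
    rfl
  have h3 : (Matrix.diagonal d1)ᴴ * Matrix.diagonal d1
      = Matrix.diagonal (fun k => ((wf n μ lam t k : ℝ) : ℂ)) := by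
    rw [Matrix.diagonal_conjTranspose, Matrix.diagonal_mul_diagonal]
    refine congrArg Matrix.diagonal (funext fun k => ?_)
    exact scalar_norm z (lam k) (xs μ (k:ℕ))
  have hWmap : (Matrix.diagonal (fun k => ((wf n μ lam t k : ℝ) : ℂ)))
      = (Matrix.diagonal (wf n μ lam t)).map (fun r : ℝ => (r:ℂ)) := by
    rw [Matrix.diagonal_map (by simp)]
  have hCch : Ccᴴ = ((Cm n μ)ᵀ).map (fun r : ℝ => (r:ℂ)) := by
    ext p q
    simp [hCcdef, Matrix.conjTranspose_apply, Matrix.map_apply, Complex.star_def,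
      Complex.conj_ofReal]
  have hGram : (Matrix.diagonal d1 * Cc * Matrix.diagonal d2)ᴴ *
        (Matrix.diagonal d1 * Cc * Matrix.diagonal d2)
      = (Matrix.diagonal d2)ᴴ *
          (((Cm n μ)ᵀ * Matrix.diagonal (wf n μ lam t) * Cm n μ).map (fun r : ℝ => (r:ℂ)))
          * Matrix.diagonal d2 := by
    rw [Matrix.conjTranspose_mul, Matrix.conjTranspose_mul]
    rw [show (Matrix.diagonal d2)ᴴ * (Ccᴴ * (Matrix.diagonal d1)ᴴ) *
        (Matrix.diagonal d1 * Cc * Matrix.diagonal d2)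
      = (Matrix.diagonal d2)ᴴ * (Ccᴴ * ((Matrix.diagonal d1)ᴴ * Matrix.diagonal d1) * Cc) *
        Matrix.diagonal d2 by simp only [Matrix.mul_assoc]]
    rw [h3, hWmap, hCch, hmul_map, hmul_map]
  have hsubdet : ∀ (M : Matrix (Fin (n+1)) (Fin (n+1)) ℂ),
      ((((Matrix.diagonal d2)ᴴ * M * Matrix.diagonal d2)).submatrix em em).det
        = (∏ p, (star (d2 (em p)) * d2 (em p))) * ((M.submatrix em em).det) := by
    intro M
    have hmat : (((Matrix.diagonal d2)ᴴ * M * Matrix.diagonal d2)).submatrix em em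
        = Matrix.diagonal (fun p => star (d2 (em p))) * M.submatrix em em *
            Matrix.diagonal (fun p => d2 (em p)) := by
      rw [Matrix.diagonal_conjTranspose]
      ext p q
      simp only [Matrix.submatrix_apply, Matrix.mul_diagonal, Matrix.diagonal_mul,
        Pi.star_apply]
    rw [hmat, Matrix.det_mul, Matrix.det_mul, Matrix.det_diagonal, Matrix.det_diagonal,
      Finset.prod_mul_distrib]
    ring
  have hdetmap : ∀ (M : Matrix (Fin ((j:ℕ)+1)) (Fin ((j:ℕ)+1)) ℝ),
      (M.map (fun r : ℝ => (r:ℂ))).det = ((M.det : ℝ) : ℂ) := by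
    intro M
    exact (Complex.ofRealHom.map_det M).symm
  have h9 : ((Cm n μ)ᵀ * Matrix.diagonal (wf n μ lam t) * Cm n μ).submatrix em em
      = (AsubM n μ j)ᵀ * Matrix.diagonal (wf n μ lam t) * AsubM n μ j := by
    rw [Matrix.submatrix_mul ((Cm n μ)ᵀ * Matrix.diagonal (wf n μ lam t)) (Cm n μ)
        em id em Function.bijective_id,
      Matrix.submatrix_mul ((Cm n μ)ᵀ) (Matrix.diagonal (wf n μ lam t))
        em id id Function.bijective_id,
      Matrix.submatrix_id_id, AsubM, Matrix.transpose_submatrix]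
  have hscal : ∀ p : Fin ((j:ℕ)+1), star (d2 (em p)) * d2 (em p)
      = ((t ^ (2 * (-(xs μ ((em p : ℕ))))) : ℝ) : ℂ) := by
    intro p
    exact scalar_norm1 z (-(xs μ ((em p : ℕ))))
  rw [DA, phi_factor n μ lam z hz, hGram, hsubdet, Matrix.submatrix_map, hdetmap, h9]
  rw [Finset.prod_congr rfl (fun p _ => hscal p), ← Complex.ofReal_prod, ← Complex.ofReal_mul]
  rw [gdet]
  norm_cast

noncomputable def sgf (μ : ℕ → ℝ) (j : ℕ) : ℝ := ∑ p ∈ Finset.range (j+1), xs μ p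
noncomputable def bf (n : ℕ) (μ : ℕ → ℝ) (j : ℕ) : ℝ := sgf μ j - em n μ j

lemma xs_succ' (μ : ℕ → ℝ) (k : ℕ) : xs μ (k+1) = xs μ k + μ k := Finset.sum_range_succ μ k

lemma bf_n (n : ℕ) (μ : ℕ → ℝ) : bf n μ n = 0 := by
  rw [bf, sgf, em, sub_eq_zero]
  refine Finset.sum_congr rfl fun p _ => ?_
  congr 1
  omega

lemma bf_diff (n : ℕ) (μ : ℕ → ℝ) (j : ℕ) (hj : j < n) :
    bf n μ (j+1) - bf n μ j = xs μ (j+1) - xs μ (n-j-1) := by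
  have hsg : sgf μ (j+1) = sgf μ j + xs μ (j+1) := Finset.sum_range_succ _ _
  have hem : em n μ (j+1) = em n μ j + xs μ (n-j-1) := by
    show (∑ p ∈ Finset.range ((j+1)+1), xs μ (n - (j+1) + p)) = em n μ j + xs μ (n-j-1)
    rw [Finset.sum_range_succ']
    have h1 : ∀ p ∈ Finset.range (j+1), xs μ (n - (j+1) + (p+1)) = xs μ (n - j + p) := by
      intro p _
      congr 1
      omega
    rw [Finset.sum_congr rfl h1, show n - (j+1) + 0 = n - j - 1 from by omega]
    rfl
  rw [bf, bf, hsg, hem]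
  ring

lemma beta_cartan (n : ℕ) (μ : ℕ → ℝ) (i : ℕ) (hi : i < n) :
    2 * bf n μ i - (if i = 0 then 0 else bf n μ (i-1)) - bf n μ (i+1)
      = -(μ i) - μ (n-1-i) := by
  cases i with
  | zero =>
    rw [if_pos rfl]
    have hd := bf_diff n μ 0 hi
    have hb0 : bf n μ 0 = xs μ 0 - xs μ n := by
      rw [bf, sgf, em]
      simp
    have hx0 : xs μ 0 = 0 := by rw [xs]; simp
    have hx1 : xs μ 1 = xs μ 0 + μ 0 := xs_succ' μ 0
    have hxn : xs μ n = xs μ (n-1) + μ (n-1) := by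
      have h := xs_succ' μ (n-1)
      rw [show n - 1 + 1 = n from by omega] at h
      exact h
    have hgoal : n - 1 - 0 = n - 1 := by omega
    rw [hgoal]
    have hn01 : n - 0 - 1 = n - 1 := by omega
    rw [hn01] at hd
    linarith
  | succ i' =>
    rw [if_neg (by omega)]
    have hd1 := bf_diff n μ i' (by omega)
    have hd2 := bf_diff n μ (i'+1) hi
    have hA : xs μ (i'+2) = xs μ (i'+1) + μ (i'+1) := xs_succ' μ (i'+1)
    have hB : xs μ (n-i'-1) = xs μ (n-i'-2) + μ (n-i'-2) := by
      have h2 : n - i' - 2 + 1 = n - i' - 1 := by omega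
      rw [← h2, xs_succ']
    have hidx : n - 1 - (i'+1) = n - i' - 2 := by omega
    have hidx2 : n - (i'+1) - 1 = n - i' - 2 := by omega
    rw [hidx2] at hd2
    have hidx3 : i' + 1 - 1 = i' := by omega
    rw [hidx3]
    rw [hidx]
    linarith

lemma cartan_sum (n : ℕ) (a : ℕ → ℕ → ℝ)
    (ha : ∀ i j, a i j = if i = j then 2 else if i = j + 1 ∨ j = i + 1 then -1 else 0)
    (b : ℕ → ℝ) (hbn : b n = 0) (i : ℕ) (hi : i < n) :
    ∑ j ∈ Finset.range n, a i j * b j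
      = 2 * b i - (if i = 0 then 0 else b (i-1)) - b (i+1) := by
  have hext : ∑ j ∈ Finset.range n, a i j * b j = ∑ j ∈ Finset.range (n+1), a i j * b j := by
    rw [Finset.sum_range_succ, hbn, mul_zero, add_zero]
  rw [hext]
  have hsplit : ∀ j, a i j * b j =
      (if i = j then 2 * b j else 0) +
        ((if i = j + 1 then -(b j) else 0) + (if j = i + 1 then -(b j) else 0)) := by
    intro j
    rw [ha]
    by_cases h1 : i = j
    · rw [← h1, if_pos rfl, if_pos rfl]
      simp [show ¬ i = i + 1 by omega]
    · rw [if_neg h1, if_neg h1]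
      by_cases h2 : i = j + 1
      · rw [if_pos (Or.inl h2), if_pos h2, if_neg (show ¬ j = i + 1 by omega)]
        ring
      · rw [if_neg h2]
        by_cases h3 : j = i + 1
        · rw [if_pos (Or.inr h3), if_pos h3]
          ring
        · rw [if_neg (show ¬ (i = j + 1 ∨ j = i + 1) by tauto), if_neg h3]
          ring
  rw [Finset.sum_congr rfl (fun j _ => hsplit j), Finset.sum_add_distrib, Finset.sum_add_distrib]
  have e1 : ∑ j ∈ Finset.range (n+1), (if i = j then 2 * b j else 0) = 2 * b i := by
    rw [Finset.sum_ite_eq (Finset.range (n+1)) i (fun j => 2 * b j),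
      if_pos (Finset.mem_range.mpr (by omega))]
  have e2 : ∑ j ∈ Finset.range (n+1), (if i = j + 1 then -(b j) else 0)
      = (if i = 0 then 0 else -(b (i-1))) := by
    cases i with
    | zero => simp
    | succ i' =>
      rw [if_neg (show ¬ i' + 1 = 0 by omega)]
      have hc : ∀ j, (if i' + 1 = j + 1 then -(b j) else 0) = (if i' = j then -(b j) else 0) := by
        intro j
        by_cases h : i' = j
        · subst h; simp
        · rw [if_neg (show ¬ i' + 1 = j + 1 by omega), if_neg h]
      rw [Finset.sum_congr rfl (fun j _ => hc j),
        Finset.sum_ite_eq (Finset.range (n+1)) i' (fun j => -(b j)),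
        if_pos (Finset.mem_range.mpr (by omega))]
      norm_num
  have e3 : ∑ j ∈ Finset.range (n+1), (if j = i + 1 then -(b j) else 0) = -(b (i+1)) := by
    rw [Finset.sum_ite_eq' (Finset.range (n+1)) (i+1) (fun j => -(b j)),
      if_pos (Finset.mem_range.mpr (by omega))]
  rw [e1, e2, e3]
  by_cases h : i = 0
  · subst h
    rw [if_pos rfl, if_pos rfl]
    ring
  · rw [if_neg h, if_neg h]
    ring


end AnT

/-- For the `A_n` Toda solutions with `C = Id`, each
`u_i(z) + 2(2 + γ_{n+1−i}) log|z|` is bounded on `{z ∈ ℂ∖ℝ_{≤0} : |z| ≥ 1}` (0-based: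
the partner index of `i` is `n − 1 − i`), i.e. `u_i = −2(2 − κγ_i) log|z| + O(1)` at
infinity. -/
theorem An_toda_asymptotics (n : ℕ) (hn : 1 ≤ n) (γ : ℕ → ℝ) (hγ : ∀ i < n, -1 < γ i)
    (μ : ℕ → ℝ) (hμ : ∀ i, μ i = γ i + 1)
    (a : ℕ → ℕ → ℝ)
    (ha : ∀ i j, a i j = if i = j then 2 else if i = j + 1 ∨ j = i + 1 then -1 else 0)
    (gUp : ℕ → ℝ) (hg : ∀ i < n, ∑ j ∈ Finset.range n, a i j * gUp j = γ i)
    (lam : Fin (n + 1) → ℝ) (hlam : ∀ k, 0 < lam k) (hprod : ∏ k, lam k = 1) :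
    ∀ i : Fin n, ∃ M : ℝ, ∀ z ∈ Complex.slitPlane, 1 ≤ ‖z‖ →
      |uA n μ lam a gUp i z +
        2 * (2 + γ (n - 1 - (i : ℕ))) * Real.log (‖z‖)| ≤ M := by
  intro i
  have hμpos : ∀ l < n, 0 < μ l := by
    intro l hl
    rw [hμ l]
    have := hγ l hl
    linarith
  have key : ∀ j : Fin n, ∃ R : ℝ, ∀ t : ℝ, 1 ≤ t →
      0 < AnT.gdet n μ lam j t ∧
        |Real.log (AnT.gdet n μ lam j t) - 2 * AnT.em n μ (j:ℕ) * Real.log t| ≤ R := by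
    intro j
    obtain ⟨c, K, hc, hb⟩ := AnT.gdet_bounds hμpos hlam j
    refine ⟨max |Real.log c| |Real.log K|, fun t ht => ?_⟩
    have ht0 : (0:ℝ) < t := lt_of_lt_of_le one_pos ht
    obtain ⟨h1, h2⟩ := hb t ht
    have hP : (0:ℝ) < t ^ (2 * AnT.em n μ (j:ℕ)) := Real.rpow_pos_of_pos ht0 _
    have hgpos : 0 < AnT.gdet n μ lam j t := lt_of_lt_of_le (mul_pos hc hP) h1
    have hK : 0 < K := by nlinarith
    have hl1 : Real.log c + 2 * AnT.em n μ (j:ℕ) * Real.log t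
        ≤ Real.log (AnT.gdet n μ lam j t) := by
      have hlog := Real.log_le_log (mul_pos hc hP) h1
      rwa [Real.log_mul (ne_of_gt hc) (ne_of_gt hP), Real.log_rpow ht0] at hlog
    have hl2 : Real.log (AnT.gdet n μ lam j t)
        ≤ Real.log K + 2 * AnT.em n μ (j:ℕ) * Real.log t := by
      have hlog := Real.log_le_log hgpos h2
      rwa [Real.log_mul (ne_of_gt hK) (ne_of_gt hP), Real.log_rpow ht0] at hlog
    refine ⟨hgpos, abs_le.mpr ⟨?_, ?_⟩⟩
    · have g1 := neg_abs_le (Real.log c)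
      have g2 := le_max_left |Real.log c| |Real.log K|
      linarith
    · have g1 := le_abs_self (Real.log K)
      have g2 := le_max_right |Real.log c| |Real.log K|
      linarith
  choose R hR using key
  refine ⟨∑ j : Fin n, |a (i:ℕ) (j:ℕ)| * R j, ?_⟩
  intro z hzslit hz1
  have hz0 : z ≠ 0 := by
    intro h
    rw [h] at hz1
    simp at hz1
    linarith
  have ht0 : (0:ℝ) < ‖z‖ := norm_pos_iff.mpr hz0
  have ht1 : (1:ℝ) ≤ ‖z‖ := hz1
  have hterm : ∀ j : Fin n,
      -Real.log ((DA n μ lam j z).re) + 2 * gUp (j:ℕ) * Real.log (‖z‖)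
        = -(Real.log (AnT.gdet n μ lam j (‖z‖))
            - 2 * AnT.em n μ (j:ℕ) * Real.log (‖z‖))
          + (2 * AnT.sgf μ (j:ℕ) + 2 * gUp (j:ℕ) - 2 * AnT.em n μ (j:ℕ))
              * Real.log (‖z‖) := by
    intro j
    have hgpos := (hR j (‖z‖) ht1).1
    have hp : (∏ p : Fin ((j:ℕ)+1), (‖z‖) ^ (2 * (-(AnT.xs μ (p:ℕ)))))
        = (‖z‖) ^ (-(2 * AnT.sgf μ (j:ℕ))) := by
      rw [AnT.prod_rpow_sum _ ht0]
      congr 1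
      rw [Fin.sum_univ_eq_sum_range (fun p => 2 * (-(AnT.xs μ p))) ((j:ℕ)+1), AnT.sgf,
        Finset.mul_sum, ← Finset.sum_neg_distrib]
      exact Finset.sum_congr rfl fun p _ => by ring
    have hre : (DA n μ lam j z).re
        = (‖z‖) ^ (-(2 * AnT.sgf μ (j:ℕ))) * AnT.gdet n μ lam j (‖z‖) := by
      rw [AnT.DA_eq n μ lam j z hz0, hp]
      exact Complex.ofReal_re _
    have hlog : Real.log ((DA n μ lam j z).re)
        = -(2 * AnT.sgf μ (j:ℕ)) * Real.log (‖z‖)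
          + Real.log (AnT.gdet n μ lam j (‖z‖)) := by
      rw [hre, Real.log_mul (ne_of_gt (Real.rpow_pos_of_pos ht0 _)) (ne_of_gt hgpos),
        Real.log_rpow ht0]
    rw [hlog]
    ring
  have hkey : (∑ jn ∈ Finset.range n,
      a (i:ℕ) jn * (2 * AnT.sgf μ jn + 2 * gUp jn - 2 * AnT.em n μ jn))
        = -2 * (2 + γ (n - 1 - (i:ℕ))) := by
    have hsplit2 : ∀ jn ∈ Finset.range n,
        a (i:ℕ) jn * (2 * AnT.sgf μ jn + 2 * gUp jn - 2 * AnT.em n μ jn)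
          = 2 * (a (i:ℕ) jn * AnT.bf n μ jn) + 2 * (a (i:ℕ) jn * gUp jn) := by
      intro jn _
      rw [AnT.bf]
      ring
    rw [Finset.sum_congr rfl hsplit2, Finset.sum_add_distrib, ← Finset.mul_sum,
      ← Finset.mul_sum,
      AnT.cartan_sum n a ha (AnT.bf n μ) (AnT.bf_n n μ) (i:ℕ) i.isLt, hg (i:ℕ) i.isLt,
      AnT.beta_cartan n μ (i:ℕ) i.isLt, hμ (i:ℕ), hμ (n - 1 - (i:ℕ))]
    ring
  have e0a : uA n μ lam a gUp i z
      = ∑ j : Fin n, (a (i:ℕ) (j:ℕ) * (-(Real.log (AnT.gdet n μ lam j (‖z‖))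
            - 2 * AnT.em n μ (j:ℕ) * Real.log (‖z‖)))
          + (a (i:ℕ) (j:ℕ) *
            (2 * AnT.sgf μ (j:ℕ) + 2 * gUp (j:ℕ) - 2 * AnT.em n μ (j:ℕ)))
              * Real.log (‖z‖)) := by
    rw [show uA n μ lam a gUp i z = ∑ j : Fin n, a (i:ℕ) (j:ℕ) *
        (-Real.log ((DA n μ lam j z).re) + 2 * gUp (j:ℕ) * Real.log (‖z‖)) from rfl]
    refine Finset.sum_congr rfl fun j _ => ?_
    rw [hterm j]
    ring
  have e0 : uA n μ lam a gUp i z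
      = (∑ j : Fin n, a (i:ℕ) (j:ℕ) * (-(Real.log (AnT.gdet n μ lam j (‖z‖))
            - 2 * AnT.em n μ (j:ℕ) * Real.log (‖z‖))))
        + (∑ j : Fin n, a (i:ℕ) (j:ℕ) *
            (2 * AnT.sgf μ (j:ℕ) + 2 * gUp (j:ℕ) - 2 * AnT.em n μ (j:ℕ)))
              * Real.log (‖z‖) := by
    rw [e0a, Finset.sum_add_distrib, ← Finset.sum_mul]
  have e1 : (∑ j : Fin n, a (i:ℕ) (j:ℕ) *
      (2 * AnT.sgf μ (j:ℕ) + 2 * gUp (j:ℕ) - 2 * AnT.em n μ (j:ℕ)))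
        = -2 * (2 + γ (n - 1 - (i:ℕ))) := by
    rw [Fin.sum_univ_eq_sum_range
      (fun jn => a (i:ℕ) jn * (2 * AnT.sgf μ jn + 2 * gUp jn - 2 * AnT.em n μ jn)) n]
    exact hkey
  have e2 : uA n μ lam a gUp i z + 2 * (2 + γ (n - 1 - (i:ℕ))) * Real.log (‖z‖)
      = ∑ j : Fin n, a (i:ℕ) (j:ℕ) * (-(Real.log (AnT.gdet n μ lam j (‖z‖))
          - 2 * AnT.em n μ (j:ℕ) * Real.log (‖z‖))) := by
    rw [e0, e1]
    ring
  rw [e2]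
  calc |∑ j : Fin n, a (i:ℕ) (j:ℕ) * (-(Real.log (AnT.gdet n μ lam j (‖z‖))
          - 2 * AnT.em n μ (j:ℕ) * Real.log (‖z‖)))|
      ≤ ∑ j : Fin n, |a (i:ℕ) (j:ℕ) * (-(Real.log (AnT.gdet n μ lam j (‖z‖))
          - 2 * AnT.em n μ (j:ℕ) * Real.log (‖z‖)))| :=
        Finset.abs_sum_le_sum_abs _ _
    _ ≤ ∑ j : Fin n, |a (i:ℕ) (j:ℕ)| * R j := by
        refine Finset.sum_le_sum fun j _ => ?_
        rw [abs_mul, abs_neg]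
        exact mul_le_mul_of_nonneg_left ((hR j (‖z‖) ht1).2) (abs_nonneg _)
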